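/- For every deterministic DSIC and IR mechanism in the two-bidder two-item online setting achieving a finite approximation factor, for every w ∈ ℝ₊² with w₁ > 0 we have π₂(w) ≥ π₁(w). -/

import Mathlib

open scoped ENNReal

noncomputable section

/-- Nonnegative orthant of ℝ² (valid type space of a bidder). -/
def Nn (p : ℝ × ℝ) : Prop := 0 ≤ p.1 ∧ 0 ≤ p.2

/-- A deterministic mechanism for two unit-demand bidders `V`, `W` and two items.
`xV1 v w` is the (scenario-independent) allocation of item 1 to `V`, `xV2 v w`
the allocation of item 2 to `V` in the scenario where both items arrive;
`pV1` is `V`'s payment in the only-item-1 scenario and `pV2` in the both-items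
scenario; similarly for `W`. -/
structure Mechanism where
  xV1 : ℝ × ℝ → ℝ × ℝ → Bool
  xV2 : ℝ × ℝ → ℝ × ℝ → Bool
  xW1 : ℝ × ℝ → ℝ × ℝ → Bool
  xW2 : ℝ × ℝ → ℝ × ℝ → Bool
  pV1 : ℝ × ℝ → ℝ × ℝ → ℝ
  pV2 : ℝ × ℝ → ℝ × ℝ → ℝ
  pW1 : ℝ × ℝ → ℝ × ℝ → ℝ
  pW2 : ℝ × ℝ → ℝ × ℝ → ℝ
  feas1 : ∀ v w, ¬(xV1 v w = true ∧ xW1 v w = true)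
  feas2 : ∀ v w, ¬(xV2 v w = true ∧ xW2 v w = true)

/-- Unit-demand value of a bidder with type `t` for the set of items indicated by `a1, a2`. -/
def setVal (t : ℝ × ℝ) (a1 a2 : Bool) : ℝ :=
  if a1 then (if a2 then max t.1 t.2 else t.1) else (if a2 then t.2 else 0)

/-- Utility of `V` with true type `t`, report `r`, opponent report `w`, when only item 1 arrives. -/
def uV1 (m : Mechanism) (t r w : ℝ × ℝ) : ℝ := (if m.xV1 r w then t.1 else 0) - m.pV1 r w

/-- Utility of `V` with true type `t`, report `r`, opponent report `w`, when both items arrive. -/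
def uV2 (m : Mechanism) (t r w : ℝ × ℝ) : ℝ := setVal t (m.xV1 r w) (m.xV2 r w) - m.pV2 r w

def uW1 (m : Mechanism) (v t r : ℝ × ℝ) : ℝ := (if m.xW1 v r then t.1 else 0) - m.pW1 v r

def uW2 (m : Mechanism) (v t r : ℝ × ℝ) : ℝ := setVal t (m.xW1 v r) (m.xW2 v r) - m.pW2 v r

/-- Dominant-strategy incentive compatibility in every arrival scenario. -/
def DSIC (m : Mechanism) : Prop :=
  (∀ t r w, Nn t → Nn r → Nn w → uV1 m t r w ≤ uV1 m t t w) ∧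
  (∀ t r w, Nn t → Nn r → Nn w → uV2 m t r w ≤ uV2 m t t w) ∧
  (∀ v t r, Nn v → Nn t → Nn r → uW1 m v t r ≤ uW1 m v t t) ∧
  (∀ v t r, Nn v → Nn t → Nn r → uW2 m v t r ≤ uW2 m v t t)

/-- Individual rationality: truthful reporting gives nonnegative utility in every scenario. -/
def IR (m : Mechanism) : Prop :=
  ∀ v w, Nn v → Nn w →
    0 ≤ uV1 m v v w ∧ 0 ≤ uV2 m v v w ∧ 0 ≤ uW1 m v w w ∧ 0 ≤ uW2 m v w w

/-- Welfare of the mechanism's allocation when only item 1 arrives. -/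
def welfare1 (m : Mechanism) (v w : ℝ × ℝ) : ℝ :=
  (if m.xV1 v w then v.1 else 0) + (if m.xW1 v w then w.1 else 0)

/-- Welfare of the mechanism's allocation when both items arrive. -/
def welfare2 (m : Mechanism) (v w : ℝ × ℝ) : ℝ :=
  setVal v (m.xV1 v w) (m.xV2 v w) + setVal w (m.xW1 v w) (m.xW2 v w)

/-- Optimal welfare when only item 1 arrives. -/
def opt1 (v w : ℝ × ℝ) : ℝ := max v.1 w.1

/-- Optimal (max-weight matching) welfare when both items arrive. -/
def opt2 (v w : ℝ × ℝ) : ℝ := max (v.1 + w.2) (v.2 + w.1)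

/-- The mechanism achieves approximation factor `H` to the optimal social welfare,
in every arrival scenario and for all reports. -/
def ApproxH (m : Mechanism) (H : ℝ) : Prop :=
  ∀ v w, Nn v → Nn w → opt1 v w ≤ H * welfare1 m v w ∧ opt2 v w ≤ H * welfare2 m v w

/-- Real-valued item-1 threshold function for bidder `V`. -/
def Thresh1 (m : Mechanism) (π₁ : ℝ × ℝ → ℝ) : Prop :=
  ∀ w v, Nn w → Nn v →
    (π₁ w < v.1 → m.xV1 v w = true) ∧ (v.1 < π₁ w → m.xV1 v w = false)

/-- Real-valued item-2 threshold function (with threshold payment) for bidder `V`,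
conditional on losing item 1. -/
def Thresh2 (m : Mechanism) (π₁ π₂ : ℝ × ℝ → ℝ) : Prop :=
  ∀ w v, Nn w → 0 < w.1 → Nn v → v.1 < π₁ w →
    (π₂ w < v.2 → m.xV2 v w = true ∧ m.pV2 v w = π₂ w) ∧
    (v.2 < π₂ w → m.xV2 v w = false ∧ m.pV2 v w = 0)

/-- When `V` wins only item 1 (in the both-items scenario) he pays `π₁ w`. -/
def PayOne (m : Mechanism) (π₁ : ℝ × ℝ → ℝ) : Prop :=
  ∀ w v, Nn w → Nn v → m.xV1 v w = true → m.xV2 v w = false → m.pV2 v w = π₁ w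

/-- Every `v` in the region `T_R^V(w)` wins both items and pays `π₂ w`. -/
def TRBoth (m : Mechanism) (π₁ π₂ : ℝ × ℝ → ℝ) : Prop :=
  ∀ w v, Nn w → 0 < w.1 → Nn v → π₁ w < v.1 → v.1 - π₁ w < v.2 - π₂ w →
    m.xV1 v w = true ∧ m.xV2 v w = true ∧ m.pV2 v w = π₂ w

/-- for a DSIC + IR mechanism with finite approximation factor,
`π₂(w) ≥ π₁(w)` for every `w` with `w₁ > 0`. -/
theorem pi2_ge_pi1 (m : Mechanism) (hD : DSIC m) (hIR : IR m)
    (H : ℝ) (hH : 1 ≤ H) (hA : ApproxH m H)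
    (π₁ π₂ : ℝ × ℝ → ℝ)
    (h1 : Thresh1 m π₁) (h2 : Thresh2 m π₁ π₂)
    (hpay : PayOne m π₁) (hTR : TRBoth m π₁ π₂) :
    ∀ w, Nn w → 0 < w.1 → π₁ w ≤ π₂ w := by
  intro w hw hw1
  by_contra hlt
  push_neg at hlt
  -- hlt : π₂ w < π₁ w
  set p1 := π₁ w with hp1
  set p2 := π₂ w with hp2
  rcases le_or_gt p1 0 with hp | hp
  · -- case π₁ w ≤ 0 : use diagonal type (x,x) with x = w.1/(2H)
    have hHpos : (0:ℝ) < H := lt_of_lt_of_le one_pos hH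
    set x := w.1 / (2 * H) with hx
    have hxpos : 0 < x := div_pos hw1 (by positivity)
    set v : ℝ × ℝ := (x, x) with hv
    have hNv : Nn v := ⟨le_of_lt hxpos, le_of_lt hxpos⟩
    obtain ⟨hxV1, hxV2, _⟩ :=
      hTR w v hw hw1 hNv (lt_of_le_of_lt hp hxpos) (by show x - π₁ w < x - π₂ w; linarith)
    have hxW1 : m.xW1 v w = false := by
      have := m.feas1 v w
      rcases Bool.eq_false_or_eq_true (m.xW1 v w) with h | h
      · exact absurd ⟨hxV1, h⟩ this
      · exact h
    have hxW2 : m.xW2 v w = false := by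
      have := m.feas2 v w
      rcases Bool.eq_false_or_eq_true (m.xW2 v w) with h | h
      · exact absurd ⟨hxV2, h⟩ this
      · exact h
    have happ := (hA v w hNv hw).2
    have hwel : welfare2 m v w = x := by
      rw [welfare2, hxV1, hxV2, hxW1, hxW2]
      simp [setVal, hv]
    have hopt : x + w.1 ≤ opt2 v w := by
      simp only [opt2, hv]
      exact le_max_right _ _
    have hHx : H * x = w.1 / 2 := by
      rw [hx, mul_div_assoc', div_eq_div_iff (by positivity) (by norm_num)]
      ring
    rw [hwel] at happ
    linarith [le_trans hopt happ]
  · -- case 0 < π₁ w : a deviation argument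
    set a := max p2 0 with ha
    have hap1 : a < p1 := max_lt hlt hp
    set t2 := (a + p1) / 2 with ht2
    set t1 := (t2 + p1) / 2 with ht1
    have ha0 : 0 ≤ a := le_max_right _ _
    have hp2a : p2 ≤ a := le_max_left _ _
    have h1a : a < t2 := by rw [ht2]; linarith
    have h2t : t2 < t1 := by rw [ht1]; linarith
    have h3t : t1 < p1 := by rw [ht1]; linarith
    have ht2pos : 0 ≤ t2 := by linarith
    have ht1pos : 0 ≤ t1 := by linarith
    set t : ℝ × ℝ := (t1, t2) with ht
    have hNt : Nn t := ⟨ht1pos, ht2pos⟩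
    -- truthful outcome for t : loses item 1, wins item 2, pays p2
    have hxV1t : m.xV1 t w = false := (h1 w t hw hNt).2 h3t
    obtain ⟨hxV2t, hpV2t⟩ := (h2 w t hw hw1 hNt h3t).1 (by
      show p2 < t2; linarith)
    -- the deviation report r = (p1+1, p1+1) wins both items paying p2
    set r : ℝ × ℝ := (p1 + 1, p1 + 1) with hr
    have hNr : Nn r := ⟨by simp [hr]; linarith, by simp [hr]; linarith⟩
    obtain ⟨hxV1r, hxV2r, hpV2r⟩ :=
      hTR w r hw hw1 hNr (by simp [hr]; linarith) (by simp [hr]; linarith)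
    have hdsic := hD.2.1 t r w hNt hNr hw
    rw [uV2, uV2, hxV1r, hxV2r, hpV2r, hxV1t, hxV2t, hpV2t] at hdsic
    simp only [setVal, ht, reduceIte, Bool.false_eq_true, if_true, if_false] at hdsic
    have hmax : max t1 t2 = t1 := max_eq_left (le_of_lt h2t)
    rw [hmax] at hdsic
    linarith
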